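/- arXiv:1305.0716 — 2 statements merged into one kernel-verified Lean document; each statement's English description precedes it below -/
import Mathlib

section
/- Let {T_j}_{j=1}^n ⊂ K^{d×r} be a generalized frame with frame operator S. For any Parseval generalized frame {R_j}_{j=1}^n ⊂ K^{d×r}, one has Σ_j ‖T_j − S^{-1/2}T_j‖²_HS ≤ Σ_j ‖T_j − R_j‖²_HS, with equality if and only if R_j = S^{-1/2}T_j for all j. -/
open scoped BigOperators ComplexOrder
open Matrix

private lemma sum_mulVec' {𝕜 : Type*} [RCLike 𝕜] {d n : ℕ}
    (M : Fin n → Matrix (Fin d) (Fin d) 𝕜) (z : Fin d → 𝕜) :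
    (∑ j, M j) *ᵥ z = ∑ j, M j *ᵥ z := by
  ext i; simp [Matrix.mulVec, dotProduct, Matrix.sum_apply, Finset.sum_mul]
  rw [Finset.sum_comm]

private lemma dot_sum' {𝕜 : Type*} [RCLike 𝕜] {d n : ℕ} (w : Fin n → Fin d → 𝕜) (v : Fin d → 𝕜) :
    v ⬝ᵥ (∑ j, w j) = ∑ j, v ⬝ᵥ w j := by
  simp [dotProduct, Finset.mul_sum]
  rw [Finset.sum_comm]

private lemma re_quad {𝕜 : Type*} [RCLike 𝕜] {d r : ℕ}
    (A : Matrix (Fin d) (Fin r) 𝕜) (z : Fin d → 𝕜) :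
    RCLike.re (star z ⬝ᵥ ((A * Aᴴ) *ᵥ z)) = ∑ i, ‖(Aᴴ *ᵥ z) i‖ ^ 2 := by
  rw [← Matrix.mulVec_mulVec, Matrix.dotProduct_mulVec]
  have h : star z ᵥ* A = star (Aᴴ *ᵥ z) := by
    rw [Matrix.star_mulVec, conjTranspose_conjTranspose]
  rw [h]
  simp [dotProduct, map_sum, RCLike.conj_mul]

private lemma hs_norm {𝕜 : Type*} [RCLike 𝕜] {d r : ℕ} (M : Matrix (Fin d) (Fin r) 𝕜) :
    ∑ i, ∑ l, ‖M i l‖ ^ 2 = RCLike.re (Matrix.trace (M * Mᴴ)) := by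
  simp [Matrix.trace, Matrix.diag, Matrix.mul_apply, Matrix.conjTranspose_apply,
    map_sum, RCLike.mul_conj]

private lemma hs_zero {𝕜 : Type*} [RCLike 𝕜] {d r : ℕ} (M : Matrix (Fin d) (Fin r) 𝕜)
    (h : ∑ i, ∑ l, ‖M i l‖ ^ 2 = 0) : M = 0 := by
  ext i l
  have h1 : ∀ i ∈ Finset.univ, (0:ℝ) ≤ ∑ l, ‖M i l‖ ^ 2 := by
    intro i _; positivity
  have h2 := (Finset.sum_eq_zero_iff_of_nonneg h1).mp h i (Finset.mem_univ i)
  have h3 : ∀ l ∈ Finset.univ, (0:ℝ) ≤ ‖M i l‖ ^ 2 := by intro l _; positivity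
  have h4 := (Finset.sum_eq_zero_iff_of_nonneg h3).mp h2 l (Finset.mem_univ l)
  simpa using pow_eq_zero_iff (n := 2) (by norm_num) |>.mp h4

/-- `{S^{-1/2} Tⱼ}` is the Parseval generalized frame closest (in the Hilbert–Schmidt
distance) to a given generalized frame `{Tⱼ}`, with equality iff `Rⱼ = S^{-1/2} Tⱼ`. -/
theorem closest_parseval_frame
    {𝕜 : Type*} [RCLike 𝕜] {d r n : ℕ}
    (T R : Fin n → Matrix (Fin d) (Fin r) 𝕜)
    (hframe : ∃ A B : ℝ, 0 < A ∧ A ≤ B ∧ ∀ x : Fin d → 𝕜,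
        A * ∑ i, ‖x i‖ ^ 2 ≤ ∑ j, ∑ i, ‖((T j)ᴴ.mulVec x) i‖ ^ 2 ∧
        ∑ j, ∑ i, ‖((T j)ᴴ.mulVec x) i‖ ^ 2 ≤ B * ∑ i, ‖x i‖ ^ 2)
    (Q : Matrix (Fin d) (Fin d) 𝕜) (hQ : Q.PosSemidef)
    (hQsq : Q * Q = (∑ j, T j * (T j)ᴴ)⁻¹)
    (hR : ∑ j, R j * (R j)ᴴ = 1) :
    (∑ j, ∑ i, ∑ l, ‖(T j - Q * T j) i l‖ ^ 2) ≤
        ∑ j, ∑ i, ∑ l, ‖(T j - R j) i l‖ ^ 2 ∧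
      ((∑ j, ∑ i, ∑ l, ‖(T j - Q * T j) i l‖ ^ 2) =
          (∑ j, ∑ i, ∑ l, ‖(T j - R j) i l‖ ^ 2) ↔ ∀ j, R j = Q * T j) := by
  obtain ⟨A, B, hA, _, hfr⟩ := hframe
  set S : Matrix (Fin d) (Fin d) 𝕜 := ∑ j, T j * (T j)ᴴ with hS
  -- S is invertible
  have hSdet : IsUnit S.det := by
    rw [← Matrix.isUnit_iff_isUnit_det, ← Matrix.mulVec_injective_iff_isUnit]
    intro x y hxy
    have hz : S *ᵥ (x - y) = 0 := by
      rw [Matrix.mulVec_sub, hxy, sub_self]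
    set z := x - y with hzdef
    have hzero : RCLike.re (star z ⬝ᵥ (S *ᵥ z)) = 0 := by rw [hz]; simp
    have hexp : RCLike.re (star z ⬝ᵥ (S *ᵥ z)) = ∑ j, ∑ i, ‖((T j)ᴴ *ᵥ z) i‖ ^ 2 := by
      rw [hS, sum_mulVec', dot_sum', map_sum]
      exact Finset.sum_congr rfl fun j _ => re_quad (T j) z
    have hlow := (hfr z).1
    have hznorm : ∑ i, ‖z i‖ ^ 2 = 0 := by
      have h0 : (0:ℝ) ≤ ∑ i, ‖z i‖ ^ 2 := by positivity
      nlinarith [hlow, hexp ▸ hzero]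
    have : z = 0 := by
      funext i
      have h3 : ∀ i ∈ Finset.univ, (0:ℝ) ≤ ‖z i‖ ^ 2 := by intro i _; positivity
      have h4 := (Finset.sum_eq_zero_iff_of_nonneg h3).mp hznorm i (Finset.mem_univ i)
      simpa using pow_eq_zero_iff (n := 2) (by norm_num) |>.mp h4
    exact sub_eq_zero.mp this
  have hSinv : S⁻¹ * S = 1 := Matrix.nonsing_inv_mul S hSdet
  have hQQS : Q * (Q * S) = 1 := by rw [← Matrix.mul_assoc, hQsq, hSinv]
  have hQdet : IsUnit Q.det := by
    have hd := congrArg Matrix.det hQQS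
    rw [Matrix.det_mul, Matrix.det_one] at hd
    exact isUnit_iff_exists_inv.mpr ⟨_, hd⟩
  have hQinv : Q⁻¹ = Q * S := Matrix.inv_eq_right_inv hQQS
  have hQH : Qᴴ = Q := hQ.1
  have hSH : Sᴴ = S := by
    rw [hS, Matrix.conjTranspose_sum]
    exact Finset.sum_congr rfl fun j _ => by
      rw [Matrix.conjTranspose_mul, conjTranspose_conjTranspose]
  have hSQ : S * Q = Q⁻¹ := by
    have : (Q * S)ᴴ = S * Q := by rw [Matrix.conjTranspose_mul, hQH, hSH]
    rw [← this, ← hQinv, Matrix.conjTranspose_nonsing_inv, hQH]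
  have hQSQ : Q * S * Q = 1 := mul_eq_one_comm.mp hQQS
  -- decomposition of Q⁻¹
  obtain ⟨Bm, hBm⟩ : ∃ Bm : Matrix (Fin d) (Fin d) 𝕜, Q = Bmᴴ * Bm := by
    open scoped MatrixOrder in exact CStarAlgebra.nonneg_iff_eq_star_mul_self.mp hQ.nonneg
  set P : Matrix (Fin d) (Fin d) 𝕜 := Bm * Q⁻¹ with hPdef
  have hQinvH : Q⁻¹ᴴ = Q⁻¹ := by rw [Matrix.conjTranspose_nonsing_inv, hQH]
  have hP : Pᴴ * P = Q⁻¹ := by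
    rw [hPdef, Matrix.conjTranspose_mul, hQinvH, Matrix.mul_assoc, ← Matrix.mul_assoc Bmᴴ,
      ← hBm, ← Matrix.mul_assoc, Matrix.nonsing_inv_mul Q hQdet, Matrix.one_mul]
  have hPdet : IsUnit P.det := by
    have h1 : IsUnit (Pᴴ * P).det := hP ▸ Matrix.isUnit_nonsing_inv_det Q hQdet
    rw [Matrix.det_mul] at h1
    exact isUnit_of_mul_isUnit_right h1
  -- trace computations
  have expand : ∀ (X Y : Matrix (Fin d) (Fin r) 𝕜),
      (X - Y) * (X - Y)ᴴ = X * Xᴴ - X * Yᴴ - Y * Xᴴ + Y * Yᴴ := by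
    intro X Y
    rw [Matrix.conjTranspose_sub, Matrix.sub_mul, Matrix.mul_sub, Matrix.mul_sub]
    abel
  have h1 : ∑ j, Matrix.trace ((T j - R j) * (T j - R j)ᴴ) =
      (∑ j, Matrix.trace (T j * (T j)ᴴ)) - (∑ j, Matrix.trace (T j * (R j)ᴴ))
        - (∑ j, Matrix.trace (R j * (T j)ᴴ))
        + Matrix.trace (1 : Matrix (Fin d) (Fin d) 𝕜) := by
    have e : ∀ j : Fin n, Matrix.trace ((T j - R j) * (T j - R j)ᴴ) =
        Matrix.trace (T j * (T j)ᴴ) - Matrix.trace (T j * (R j)ᴴ)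
          - Matrix.trace (R j * (T j)ᴴ) + Matrix.trace (R j * (R j)ᴴ) := by
      intro j; rw [expand]; simp [Matrix.trace_add, Matrix.trace_sub]
    rw [Finset.sum_congr rfl fun j _ => e j, Finset.sum_add_distrib, Finset.sum_sub_distrib,
      Finset.sum_sub_distrib]
    congr 1
    rw [← Matrix.trace_sum, hR]
  have h2 : ∑ j, Matrix.trace ((T j - Q * T j) * (T j - Q * T j)ᴴ) =
      (∑ j, Matrix.trace (T j * (T j)ᴴ)) - Matrix.trace (Q * S) - Matrix.trace (Q * S)
        + Matrix.trace (1 : Matrix (Fin d) (Fin d) 𝕜) := by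
    have e : ∀ j : Fin n, Matrix.trace ((T j - Q * T j) * (T j - Q * T j)ᴴ) =
        Matrix.trace (T j * (T j)ᴴ) - Matrix.trace (T j * (T j)ᴴ * Q)
          - Matrix.trace (Q * (T j * (T j)ᴴ)) + Matrix.trace (Q * (T j * (T j)ᴴ) * Q) := by
      intro j
      rw [expand, Matrix.conjTranspose_mul, hQH]
      simp only [Matrix.trace_add, Matrix.trace_sub]
      simp [Matrix.mul_assoc]
    rw [Finset.sum_congr rfl fun j _ => e j, Finset.sum_add_distrib, Finset.sum_sub_distrib,
      Finset.sum_sub_distrib]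
    have s1 : ∑ j, Matrix.trace (T j * (T j)ᴴ * Q) = Matrix.trace (Q * S) := by
      rw [← Matrix.trace_sum, ← Finset.sum_mul, ← hS, Matrix.trace_mul_comm]
    have s2 : ∑ j, Matrix.trace (Q * (T j * (T j)ᴴ)) = Matrix.trace (Q * S) := by
      rw [← Matrix.trace_sum, ← Finset.mul_sum, ← hS]
    have s3 : ∑ j, Matrix.trace (Q * (T j * (T j)ᴴ) * Q) =
        Matrix.trace (1 : Matrix (Fin d) (Fin d) 𝕜) := by
      rw [← Matrix.trace_sum, ← Finset.sum_mul, ← Finset.mul_sum, ← hS, hQSQ]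
    rw [s1, s2, s3]
  have h3 : ∑ j, Matrix.trace ((P * (R j - Q * T j)) * (P * (R j - Q * T j))ᴴ) =
      Matrix.trace (Q * S) - (∑ j, Matrix.trace (R j * (T j)ᴴ))
        - (∑ j, Matrix.trace (T j * (R j)ᴴ)) + Matrix.trace (Q * S) := by
    have e : ∀ j : Fin n, Matrix.trace ((P * (R j - Q * T j)) * (P * (R j - Q * T j))ᴴ) =
        Matrix.trace (Q⁻¹ * ((R j - Q * T j) * (R j - Q * T j)ᴴ)) := by
      intro j
      have hshape : (P * (R j - Q * T j)) * (P * (R j - Q * T j))ᴴ =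
          P * ((R j - Q * T j) * (R j - Q * T j)ᴴ) * Pᴴ := by
        rw [Matrix.conjTranspose_mul]
        simp [Matrix.mul_assoc]
      rw [hshape, Matrix.trace_mul_cycle, hP]
    have e2 : ∀ j : Fin n, Matrix.trace (Q⁻¹ * ((R j - Q * T j) * (R j - Q * T j)ᴴ)) =
        Matrix.trace (Q⁻¹ * (R j * (R j)ᴴ)) - Matrix.trace (R j * (T j)ᴴ)
          - Matrix.trace (T j * (R j)ᴴ) + Matrix.trace (T j * (T j)ᴴ * Q) := by
      intro j
      rw [expand, Matrix.conjTranspose_mul, hQH]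
      rw [Matrix.mul_add, Matrix.mul_sub, Matrix.mul_sub]
      simp only [Matrix.trace_add, Matrix.trace_sub]
      have t2 : Matrix.trace (Q⁻¹ * (R j * ((T j)ᴴ * Q))) = Matrix.trace (R j * (T j)ᴴ) := by
        rw [Matrix.trace_mul_comm, Matrix.mul_assoc, Matrix.mul_assoc,
          Matrix.mul_nonsing_inv Q hQdet, Matrix.mul_one]
      have t3 : Matrix.trace (Q⁻¹ * (Q * T j * (R j)ᴴ)) = Matrix.trace (T j * (R j)ᴴ) := by
        rw [← Matrix.mul_assoc, ← Matrix.mul_assoc, Matrix.nonsing_inv_mul Q hQdet,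
          Matrix.one_mul]
      have t4 : Matrix.trace (Q⁻¹ * (Q * T j * ((T j)ᴴ * Q))) =
          Matrix.trace (T j * (T j)ᴴ * Q) := by
        rw [← Matrix.mul_assoc, ← Matrix.mul_assoc Q⁻¹ Q (T j), Matrix.nonsing_inv_mul Q hQdet,
          Matrix.one_mul, ← Matrix.mul_assoc]
      rw [t2, t3, t4]
    rw [Finset.sum_congr rfl fun j _ => e j, Finset.sum_congr rfl fun j _ => e2 j,
      Finset.sum_add_distrib, Finset.sum_sub_distrib, Finset.sum_sub_distrib]
    have s1 : ∑ j, Matrix.trace (Q⁻¹ * (R j * (R j)ᴴ)) = Matrix.trace (Q * S) := by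
      rw [← Matrix.trace_sum, ← Finset.mul_sum, hR, Matrix.mul_one, hQinv]
    have s4 : ∑ j, Matrix.trace (T j * (T j)ᴴ * Q) = Matrix.trace (Q * S) := by
      rw [← Matrix.trace_sum, ← Finset.sum_mul, ← hS, Matrix.trace_mul_comm]
    rw [s1, s4]
  -- main real identity
  have key : (∑ j, ∑ i, ∑ l, ‖(T j - R j) i l‖ ^ 2) =
      (∑ j, ∑ i, ∑ l, ‖(T j - Q * T j) i l‖ ^ 2)
        + ∑ j, ∑ i, ∑ l, ‖(P * (R j - Q * T j)) i l‖ ^ 2 := by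
    have k1 : (∑ j, ∑ i, ∑ l, ‖(T j - R j) i l‖ ^ 2) =
        RCLike.re (∑ j, Matrix.trace ((T j - R j) * (T j - R j)ᴴ)) := by
      rw [map_sum]; exact Finset.sum_congr rfl fun j _ => hs_norm _
    have k2 : (∑ j, ∑ i, ∑ l, ‖(T j - Q * T j) i l‖ ^ 2) =
        RCLike.re (∑ j, Matrix.trace ((T j - Q * T j) * (T j - Q * T j)ᴴ)) := by
      rw [map_sum]; exact Finset.sum_congr rfl fun j _ => hs_norm _
    have k3 : (∑ j, ∑ i, ∑ l, ‖(P * (R j - Q * T j)) i l‖ ^ 2) =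
        RCLike.re (∑ j, Matrix.trace ((P * (R j - Q * T j)) * (P * (R j - Q * T j))ᴴ)) := by
      rw [map_sum]; exact Finset.sum_congr rfl fun j _ => hs_norm _
    rw [k1, k2, k3, h1, h2, h3, ← map_add]
    congr 1
    ring
  have hPos : (0:ℝ) ≤ ∑ j, ∑ i, ∑ l, ‖(P * (R j - Q * T j)) i l‖ ^ 2 := by positivity
  constructor
  · linarith [key]
  constructor
  · intro heq
    have hz : (∑ j, ∑ i, ∑ l, ‖(P * (R j - Q * T j)) i l‖ ^ 2) = 0 := by linarith [key]
    intro j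
    have hjz : (∑ i, ∑ l, ‖(P * (R j - Q * T j)) i l‖ ^ 2) = 0 := by
      have hall : ∀ k ∈ Finset.univ, (0:ℝ) ≤ ∑ i, ∑ l, ‖(P * (R k - Q * T k)) i l‖ ^ 2 := by
        intro k _; positivity
      exact (Finset.sum_eq_zero_iff_of_nonneg hall).mp hz j (Finset.mem_univ j)
    have hM0 : P * (R j - Q * T j) = 0 := hs_zero _ hjz
    have : R j - Q * T j = 0 := by
      have h5 := congrArg (fun M => P⁻¹ * M) hM0
      simpa [← Matrix.mul_assoc, Matrix.nonsing_inv_mul P hPdet] using h5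
    exact sub_eq_zero.mp this
  · intro hall
    have : (∑ j, ∑ i, ∑ l, ‖(P * (R j - Q * T j)) i l‖ ^ 2) = 0 := by
      refine Finset.sum_eq_zero fun j _ => ?_
      rw [hall j, sub_self, Matrix.mul_zero]
      simp
    linarith [key]
end

section
/- Let M_k = M(Γ_k) be the matrices arising in the iteration Γ_{k+1} = Γ_k^{1/2} M_k^{-1} Γ_k^{1/2} / trace(Γ_k M_k^{-1}) starting from Γ_0 = (1/d)I_d, where M(Γ) = (d/n) Σ_j (Γ^{1/2}T_jT_j*Γ^{1/2})/trace(T_j*ΓT_j) for a generalized frame {T_j}_{j=1}^n with all T_j ≠ 0. Then the smallest eigenvalues λ_{d,k} of M_k form a nondecreasing sequence and the largest eigenvalues λ_{1,k} of M_k form a nonincreasing sequence in k. -/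
open scoped BigOperators ComplexOrder
open Matrix

namespace EVM

variable {𝕜 : Type*} [RCLike 𝕜] {d r : ℕ}

lemma smul_psd {c : ℝ} (hc : 0 ≤ c) {A : Matrix (Fin d) (Fin d) 𝕜} (hA : A.PosSemidef) :
    ((c : 𝕜) • A).PosSemidef := by
  refine PosSemidef.of_dotProduct_mulVec_nonneg ?_ fun x => ?_
  · unfold Matrix.IsHermitian
    rw [conjTranspose_smul, hA.1, RCLike.star_def, RCLike.conj_ofReal]
  · rw [smul_mulVec, dotProduct_smul, smul_eq_mul]
    exact mul_nonneg (by exact_mod_cast hc) (hA.dotProduct_mulVec_nonneg x)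

lemma smul_pd {c : ℝ} (hc : 0 < c) {A : Matrix (Fin d) (Fin d) 𝕜} (hA : A.PosDef) :
    ((c : 𝕜) • A).PosDef := by
  refine PosDef.of_dotProduct_mulVec_pos (smul_psd hc.le hA.posSemidef).1 fun x hx => ?_
  rw [smul_mulVec, dotProduct_smul, smul_eq_mul]
  exact mul_pos (by exact_mod_cast hc) (hA.dotProduct_mulVec_pos hx)

lemma sum_psd {ι : Type*} (s : Finset ι) (f : ι → Matrix (Fin d) (Fin d) 𝕜)
    (h : ∀ i ∈ s, (f i).PosSemidef) : (∑ i ∈ s, f i).PosSemidef :=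
  Finset.sum_induction f _ (fun _ _ ha hb => ha.add hb) .zero h

lemma trace_psd_nonneg {A : Matrix (Fin d) (Fin d) 𝕜} (hA : A.PosSemidef) :
    0 ≤ Matrix.trace A := by
  have key : ∀ i, 0 ≤ A i i := by
    intro i
    have := hA.dotProduct_mulVec_nonneg (Pi.single i 1 : Fin d → 𝕜)
    have hs : star (Pi.single i (1 : 𝕜)) = (Pi.single i 1 : Fin d → 𝕜) := by
      ext j; rcases eq_or_ne j i with rfl | h <;> simp [Pi.single_apply, *]
    rw [hs, single_dotProduct, one_mul, mulVec_single] at this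
    simpa using this
  exact Finset.sum_nonneg fun i _ => key i

lemma trace_pd_pos (hd : 0 < d) {A : Matrix (Fin d) (Fin d) 𝕜} (hA : A.PosDef) :
    0 < Matrix.trace A := by
  have key : ∀ i, 0 < A i i := by
    intro i
    have hx : (Pi.single i 1 : Fin d → 𝕜) ≠ 0 := by
      intro h; simpa using congrFun h i
    have := hA.dotProduct_mulVec_pos hx
    have hs : star (Pi.single i (1 : 𝕜)) = (Pi.single i 1 : Fin d → 𝕜) := by
      ext j; rcases eq_or_ne j i with rfl | h <;> simp [Pi.single_apply, *]
    rw [hs, single_dotProduct, one_mul, mulVec_single] at this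
    simpa using this
  haveI : Nonempty (Fin d) := ⟨⟨0, hd⟩⟩
  exact Finset.sum_pos (fun i _ => key i) Finset.univ_nonempty

lemma trace_ctm (S : Matrix (Fin d) (Fin r) 𝕜) :
    Matrix.trace (Sᴴ * S) = ((∑ j, ∑ i, ‖S i j‖ ^ 2 : ℝ) : 𝕜) := by
  have key : ∀ (i : Fin d) (j : Fin r), (star (S i j)) * S i j = ((‖S i j‖ ^ 2 : ℝ) : 𝕜) := by
    intro i j
    rw [RCLike.star_def, RCLike.conj_mul]
    norm_cast
  simp only [Matrix.trace, Matrix.diag, Matrix.mul_apply, conjTranspose_apply, key]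
  push_cast
  rfl

lemma sum_norm_pos {S : Matrix (Fin d) (Fin r) 𝕜} (hS : S ≠ 0) :
    0 < ∑ j, ∑ i, ‖S i j‖ ^ 2 := by
  obtain ⟨i0, j0, h0⟩ : ∃ i j, S i j ≠ 0 := by
    by_contra h; push_neg at h
    exact hS (by ext i j; simpa using h i j)
  refine Finset.sum_pos' (fun j _ => Finset.sum_nonneg fun i _ => sq_nonneg _)
    ⟨j0, Finset.mem_univ _,
      Finset.sum_pos' (fun i _ => sq_nonneg _) ⟨i0, Finset.mem_univ _, pow_pos (norm_pos_iff.mpr h0) 2⟩⟩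

lemma quad (B : Matrix (Fin d) (Fin r) 𝕜) (x : Fin d → 𝕜) :
    dotProduct (star x) ((B * Bᴴ) *ᵥ x) = dotProduct (star (Bᴴ *ᵥ x)) (Bᴴ *ᵥ x) := by
  rw [← mulVec_mulVec, dotProduct_mulVec, star_mulVec, conjTranspose_conjTranspose]


lemma sum_mulVec {ι : Type*} (s : Finset ι) (f : ι → Matrix (Fin d) (Fin d) 𝕜) (x : Fin d → 𝕜) :
    (∑ i ∈ s, f i) *ᵥ x = ∑ i ∈ s, f i *ᵥ x := by
  classical
  induction s using Finset.induction_on with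
  | empty => simp
  | insert _ _ h ih => rw [Finset.sum_insert h, Finset.sum_insert h, add_mulVec, ih]

lemma dot_sum (x : Fin d → 𝕜) {ι : Type*} (s : Finset ι) (v : ι → Fin d → 𝕜) :
    dotProduct x (∑ i ∈ s, v i) = ∑ i ∈ s, dotProduct x (v i) := by
  classical
  induction s using Finset.induction_on with
  | empty => simp
  | insert _ _ h ih => rw [Finset.sum_insert h, Finset.sum_insert h, dotProduct_add, ih]

end EVM


namespace EVM2

variable {𝕜 : Type*} [RCLike 𝕜] {d : ℕ} {A : Matrix (Fin d) (Fin d) 𝕜}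

lemma conj_diag_psd (hA : A.IsHermitian) {f : Fin d → ℝ} (hf : ∀ i, 0 ≤ f i) :
    ((hA.eigenvectorUnitary : Matrix (Fin d) (Fin d) 𝕜) * diagonal (RCLike.ofReal ∘ f) *
      star (hA.eigenvectorUnitary : Matrix (Fin d) (Fin d) 𝕜)).PosSemidef := by
  have h1 : (diagonal (RCLike.ofReal ∘ f) : Matrix (Fin d) (Fin d) 𝕜).PosSemidef :=
    posSemidef_diagonal_iff.mpr fun i => by
      simpa using (RCLike.ofReal_nonneg (K := 𝕜)).mpr (hf i)
  simpa only [Matrix.star_eq_conjTranspose] using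
    h1.mul_mul_conjTranspose_same (hA.eigenvectorUnitary : Matrix (Fin d) (Fin d) 𝕜)

lemma smul_one_conj (hA : A.IsHermitian) (a : ℝ) :
    (hA.eigenvectorUnitary : Matrix (Fin d) (Fin d) 𝕜) * ((a : 𝕜) • 1) *
      star (hA.eigenvectorUnitary : Matrix (Fin d) (Fin d) 𝕜) = (a : 𝕜) • 1 := by
  rw [mul_smul_comm, mul_one, smul_mul_assoc]
  congr 1
  exact Unitary.coe_mul_star_self _

lemma diag_sub_smul_one (g : Fin d → ℝ) (a : ℝ) :
    (diagonal (RCLike.ofReal ∘ fun i => g i - a) : Matrix (Fin d) (Fin d) 𝕜) =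
      diagonal (RCLike.ofReal ∘ g) - (a : 𝕜) • 1 := by
  rw [smul_one_eq_diagonal]
  ext i j
  simp only [Matrix.sub_apply, Matrix.diagonal_apply, Function.comp_apply]
  split <;> push_cast <;> ring

lemma diag_smul_one_sub (g : Fin d → ℝ) (b : ℝ) :
    (diagonal (RCLike.ofReal ∘ fun i => b - g i) : Matrix (Fin d) (Fin d) 𝕜) =
      (b : 𝕜) • 1 - diagonal (RCLike.ofReal ∘ g) := by
  rw [smul_one_eq_diagonal]
  ext i j
  simp only [Matrix.sub_apply, Matrix.diagonal_apply, Function.comp_apply]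
  split <;> push_cast <;> ring

lemma sub_smul_psd (hA : A.IsHermitian) {a : ℝ} (h : ∀ i, a ≤ hA.eigenvalues i) :
    (A - (a : 𝕜) • 1).PosSemidef := by
  have key : A - (a : 𝕜) • 1 = (hA.eigenvectorUnitary : Matrix (Fin d) (Fin d) 𝕜) *
      diagonal (RCLike.ofReal ∘ fun i => hA.eigenvalues i - a) *
      star (hA.eigenvectorUnitary : Matrix (Fin d) (Fin d) 𝕜) := by
    rw [diag_sub_smul_one, Matrix.mul_sub, Matrix.sub_mul, smul_one_conj hA a,
      ← hA.spectral_theorem.trans (Unitary.conjStarAlgAut_apply _ _)]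
  rw [key]
  exact conj_diag_psd hA fun i => sub_nonneg.mpr (h i)

lemma smul_sub_psd (hA : A.IsHermitian) {b : ℝ} (h : ∀ i, hA.eigenvalues i ≤ b) :
    ((b : 𝕜) • 1 - A).PosSemidef := by
  have key : (b : 𝕜) • 1 - A = (hA.eigenvectorUnitary : Matrix (Fin d) (Fin d) 𝕜) *
      diagonal (RCLike.ofReal ∘ fun i => b - hA.eigenvalues i) *
      star (hA.eigenvectorUnitary : Matrix (Fin d) (Fin d) 𝕜) := by
    rw [diag_smul_one_sub, Matrix.mul_sub, Matrix.sub_mul, smul_one_conj hA b,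
      ← hA.spectral_theorem.trans (Unitary.conjStarAlgAut_apply _ _)]
  rw [key]
  exact conj_diag_psd hA fun i => sub_nonneg.mpr (h i)

lemma norm_one_dot (hA : A.IsHermitian) (i : Fin d) :
    dotProduct (star ⇑(hA.eigenvectorBasis i)) ⇑(hA.eigenvectorBasis i) = 1 := by
  rw [dotProduct_comm, ← EuclideanSpace.inner_eq_star_dotProduct, inner_self_eq_norm_sq_to_K,
    hA.eigenvectorBasis.orthonormal.1 i]
  simp

lemma le_eig (hA : A.IsHermitian) {a : ℝ} (h : (A - (a : 𝕜) • 1).PosSemidef) (i : Fin d) :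
    a ≤ hA.eigenvalues i := by
  have h2 := h.re_dotProduct_nonneg ⇑(hA.eigenvectorBasis i)
  rw [sub_mulVec, dotProduct_sub, map_sub, smul_mulVec, one_mulVec, dotProduct_smul,
    smul_eq_mul, norm_one_dot hA i, mul_one, RCLike.ofReal_re, sub_nonneg,
    ← hA.eigenvalues_eq i] at h2
  exact h2

lemma eig_le (hA : A.IsHermitian) {b : ℝ} (h : ((b : 𝕜) • 1 - A).PosSemidef) (i : Fin d) :
    hA.eigenvalues i ≤ b := by
  have h2 := h.re_dotProduct_nonneg ⇑(hA.eigenvectorBasis i)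
  rw [sub_mulVec, dotProduct_sub, map_sub, smul_mulVec, one_mulVec, dotProduct_smul,
    smul_eq_mul, norm_one_dot hA i, mul_one, RCLike.ofReal_re, sub_nonneg,
    ← hA.eigenvalues_eq i] at h2
  exact h2

end EVM2


namespace EVM2

variable {𝕜 : Type*} [RCLike 𝕜] {d : ℕ} {A : Matrix (Fin d) (Fin d) 𝕜}

lemma conj_mul_conj (U : Matrix (Fin d) (Fin d) 𝕜) (hU : star U * U = 1)
    (X Y : Matrix (Fin d) (Fin d) 𝕜) :
    (U * X * star U) * (U * Y * star U) = U * (X * Y) * star U := by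
  calc (U * X * star U) * (U * Y * star U) = U * X * (star U * U) * Y * star U := by
        simp only [Matrix.mul_assoc]
    _ = U * (X * Y) * star U := by
        rw [hU, Matrix.mul_one]
        simp only [Matrix.mul_assoc]

lemma inv_spectral (hA : A.PosDef) :
    A⁻¹ = (hA.1.eigenvectorUnitary : Matrix (Fin d) (Fin d) 𝕜) *
      diagonal (RCLike.ofReal ∘ fun i => (hA.1.eigenvalues i)⁻¹) *
      star (hA.1.eigenvectorUnitary : Matrix (Fin d) (Fin d) 𝕜) := by
  apply Matrix.inv_eq_left_inv
  have h1 : ((hA.1.eigenvectorUnitary : Matrix (Fin d) (Fin d) 𝕜) *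
      diagonal (RCLike.ofReal ∘ fun i => (hA.1.eigenvalues i)⁻¹) *
      star (hA.1.eigenvectorUnitary : Matrix (Fin d) (Fin d) 𝕜)) *
      ((hA.1.eigenvectorUnitary : Matrix (Fin d) (Fin d) 𝕜) *
      diagonal (RCLike.ofReal ∘ hA.1.eigenvalues) *
      star (hA.1.eigenvectorUnitary : Matrix (Fin d) (Fin d) 𝕜)) = 1 := by
      rw [conj_mul_conj _ (Unitary.coe_star_mul_self _)]
      rw [diagonal_mul_diagonal]
      have hone : (diagonal (fun i => ((RCLike.ofReal ∘ fun i => (hA.1.eigenvalues i)⁻¹) i) *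
          ((RCLike.ofReal ∘ hA.1.eigenvalues) i)) : Matrix (Fin d) (Fin d) 𝕜) = 1 := by
        have hfun : (fun i => ((RCLike.ofReal ∘ fun i => (hA.1.eigenvalues i)⁻¹) i) *
            ((RCLike.ofReal ∘ hA.1.eigenvalues) i)) = (fun _ : Fin d => (1 : 𝕜)) := by
          funext i
          simp only [Function.comp_apply, ← RCLike.ofReal_mul]
          rw [inv_mul_cancel₀ (hA.eigenvalues_pos i).ne']
          simp
        rw [hfun]
        exact diagonal_one
      rw [hone, Matrix.mul_one]
      exact Unitary.coe_mul_star_self _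
  rw [← hA.1.spectral_theorem.trans (Unitary.conjStarAlgAut_apply _ _)] at h1
  exact h1

lemma inv_upper_psd (hA : A.PosDef) {a : ℝ} (ha : 0 < a)
    (h : ∀ i, a ≤ hA.1.eigenvalues i) :
    (((a⁻¹ : ℝ) : 𝕜) • 1 - A⁻¹).PosSemidef := by
  have key : ((a⁻¹ : ℝ) : 𝕜) • 1 - A⁻¹ =
      (hA.1.eigenvectorUnitary : Matrix (Fin d) (Fin d) 𝕜) *
      diagonal (RCLike.ofReal ∘ fun i => a⁻¹ - (hA.1.eigenvalues i)⁻¹) *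
      star (hA.1.eigenvectorUnitary : Matrix (Fin d) (Fin d) 𝕜) := by
    rw [diag_smul_one_sub, Matrix.mul_sub, Matrix.sub_mul,
      smul_one_conj hA.1 a⁻¹, ← inv_spectral hA]
  rw [key]
  refine conj_diag_psd hA.1 fun i => sub_nonneg.mpr ?_
  exact inv_anti₀ ha (h i)

lemma inv_lower_psd (hA : A.PosDef) {b : ℝ}
    (h : ∀ i, hA.1.eigenvalues i ≤ b) :
    (A⁻¹ - ((b⁻¹ : ℝ) : 𝕜) • 1).PosSemidef := by
  have key : A⁻¹ - ((b⁻¹ : ℝ) : 𝕜) • 1 =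
      (hA.1.eigenvectorUnitary : Matrix (Fin d) (Fin d) 𝕜) *
      diagonal (RCLike.ofReal ∘ fun i => (hA.1.eigenvalues i)⁻¹ - b⁻¹) *
      star (hA.1.eigenvectorUnitary : Matrix (Fin d) (Fin d) 𝕜) := by
    rw [diag_sub_smul_one, Matrix.mul_sub, Matrix.sub_mul,
      smul_one_conj hA.1 b⁻¹, ← inv_spectral hA]
  rw [key]
  refine conj_diag_psd hA.1 fun i => sub_nonneg.mpr ?_
  exact inv_anti₀ (hA.eigenvalues_pos i) (h i)

end EVM2




/-- In the iteration `Γ_{k+1} = Γ_k^{1/2} M_k⁻¹ Γ_k^{1/2} / trace(Γ_k M_k⁻¹)` with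
`Γ_0 = (1/d) I` and `M_k = M(Γ_k) = (d/n) ∑ⱼ Γ_k^{1/2} Tⱼ Tⱼᴴ Γ_k^{1/2} / trace(Tⱼᴴ Γ_k Tⱼ)`,
the smallest eigenvalues of `M_k` form a nondecreasing sequence and the largest
eigenvalues of `M_k` form a nonincreasing sequence. -/
theorem eigenvalue_monotonicity
    {𝕜 : Type*} [RCLike 𝕜] {d r n : ℕ} (hd : 0 < d) (hn : 0 < n)
    (T : Fin n → Matrix (Fin d) (Fin r) 𝕜)
    (hframe : ∃ A B : ℝ, 0 < A ∧ A ≤ B ∧ ∀ x : Fin d → 𝕜,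
        A * ∑ i, ‖x i‖ ^ 2 ≤ ∑ j, ∑ i, ‖((T j)ᴴ.mulVec x) i‖ ^ 2 ∧
        ∑ j, ∑ i, ‖((T j)ᴴ.mulVec x) i‖ ^ 2 ≤ B * ∑ i, ‖x i‖ ^ 2)
    (hT : ∀ j, T j ≠ 0)
    (Γ M P : ℕ → Matrix (Fin d) (Fin d) 𝕜)
    (hΓ0 : Γ 0 = ((d : 𝕜))⁻¹ • (1 : Matrix (Fin d) (Fin d) 𝕜))
    (hPsd : ∀ k, (P k).PosSemidef) (hPsq : ∀ k, P k * P k = Γ k)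
    (hM : ∀ k, M k = (((d : ℝ) / n : ℝ) : 𝕜) •
        ∑ j, (Matrix.trace ((T j)ᴴ * Γ k * T j))⁻¹ • (P k * T j * (T j)ᴴ * P k))
    (hrec : ∀ k, Γ (k + 1) =
        (Matrix.trace (Γ k * (M k)⁻¹))⁻¹ • (P k * (M k)⁻¹ * P k))
    (hH : ∀ k, (M k).IsHermitian) :
    Monotone (fun k => ⨅ i, (hH k).eigenvalues i) ∧
      Antitone (fun k => ⨆ i, (hH k).eigenvalues i) := by
  classical
  obtain ⟨A₀, B₀, hA₀, _hAB, hfr⟩ := hframe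
  haveI : Nonempty (Fin d) := ⟨⟨0, hd⟩⟩
  have hdn : (0 : ℝ) < (d : ℝ) / n := div_pos (Nat.cast_pos.mpr hd) (Nat.cast_pos.mpr hn)
  set Q : ℕ → Matrix (Fin d) (Fin d) 𝕜 := fun k =>
    (((d : ℝ) / n : ℝ) : 𝕜) •
      ∑ j, (Matrix.trace ((T j)ᴴ * Γ k * T j))⁻¹ • (T j * (T j)ᴴ) with hQdef
  have hPQP : ∀ k l : ℕ, P l * Q k * P l = (((d : ℝ) / n : ℝ) : 𝕜) •
      ∑ j, (Matrix.trace ((T j)ᴴ * Γ k * T j))⁻¹ • (P l * T j * (T j)ᴴ * P l) := by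
    intro k l
    simp only [hQdef, smul_mul_assoc, mul_smul_comm, Finset.mul_sum, Finset.sum_mul,
      Matrix.mul_assoc]
  have hMQ : ∀ k, M k = P k * Q k * P k := by
    intro k
    rw [hM k, hPQP k k]
  have htrf : ∀ k (j : Fin n), (T j)ᴴ * Γ k * T j = (P k * T j)ᴴ * (P k * T j) := by
    intro k j
    rw [conjTranspose_mul, (hPsd k).1, ← hPsq k]
    simp only [Matrix.mul_assoc]
  have hPdet : ∀ k, (Γ k).PosDef → IsUnit (P k).det := by
    intro k hG
    rw [isUnit_iff_ne_zero]
    intro h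
    have h2 : (Γ k).det = 0 := by rw [← hPsq k, Matrix.det_mul, h, mul_zero]
    exact hG.det_pos.ne' h2
  have hPpd : ∀ k, (Γ k).PosDef → (P k).PosDef := by
    intro k hG
    refine PosDef.of_dotProduct_mulVec_pos (hPsd k).1 fun x hx => ?_
    rcases lt_or_eq_of_le ((hPsd k).dotProduct_mulVec_nonneg x) with h | h
    · exact h
    · exfalso
      have h2 := ((hPsd k).dotProduct_mulVec_zero_iff x).mp h.symm
      have hinj := Matrix.mulVec_injective_iff_isUnit.mpr
        ((Matrix.isUnit_iff_isUnit_det _).mpr (hPdet k hG))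
      exact hx (hinj (h2.trans (Matrix.mulVec_zero (P k)).symm))
  have hPTne : ∀ k, (Γ k).PosDef → ∀ j : Fin n, P k * T j ≠ 0 := by
    intro k hG j h0
    apply hT j
    calc T j = ((P k)⁻¹ * P k) * T j := by
          rw [Matrix.nonsing_inv_mul _ (hPdet k hG), Matrix.one_mul]
      _ = (P k)⁻¹ * (P k * T j) := by rw [Matrix.mul_assoc]
      _ = 0 := by rw [h0, Matrix.mul_zero]
  have htpos : ∀ k, (Γ k).PosDef → ∀ j : Fin n,
      ∃ u : ℝ, 0 < u ∧ Matrix.trace ((T j)ᴴ * Γ k * T j) = (u : 𝕜) := by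
    intro k hG j
    refine ⟨∑ b, ∑ a, ‖(P k * T j) a b‖ ^ 2, EVM.sum_norm_pos (hPTne k hG j), ?_⟩
    rw [htrf k j, EVM.trace_ctm]
  have hTTpsd : ∀ j : Fin n, (T j * (T j)ᴴ).PosSemidef := fun j =>
    Matrix.posSemidef_self_mul_conjTranspose (T j)
  have hQpd : ∀ k, (Γ k).PosDef → (Q k).PosDef := by
    intro k hG
    have hterm : ∀ j : Fin n, ((Matrix.trace ((T j)ᴴ * Γ k * T j))⁻¹ •
        (T j * (T j)ᴴ)).PosSemidef := by
      intro j
      obtain ⟨u, hu, hueq⟩ := htpos k hG j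
      rw [hueq, ← RCLike.ofReal_inv]
      exact EVM.smul_psd (inv_nonneg.mpr hu.le) (hTTpsd j)
    have hpsd : (Q k).PosSemidef := by
      simp only [hQdef]
      exact EVM.smul_psd hdn.le (EVM.sum_psd _ _ fun j _ => hterm j)
    refine PosDef.of_dotProduct_mulVec_pos hpsd.1 fun x hx => ?_
    obtain ⟨j0, hj0⟩ : ∃ j : Fin n, (T j)ᴴ *ᵥ x ≠ 0 := by
      by_contra hall
      push_neg at hall
      have h1 := (hfr x).1
      have hx2 : 0 < ∑ i, ‖x i‖ ^ 2 := by
        obtain ⟨i, hi⟩ := Function.ne_iff.mp hx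
        exact Finset.sum_pos' (fun _ _ => sq_nonneg _)
          ⟨i, Finset.mem_univ _, pow_pos (norm_pos_iff.mpr hi) 2⟩
      have h2 : ∑ j, ∑ i, ‖((T j)ᴴ.mulVec x) i‖ ^ 2 = 0 := by
        refine Finset.sum_eq_zero fun j _ => ?_
        rw [hall j]
        simp
      rw [h2] at h1
      nlinarith [mul_pos hA₀ hx2]
    simp only [hQdef]
    rw [smul_mulVec, dotProduct_smul, smul_eq_mul]
    refine mul_pos (by exact_mod_cast hdn) ?_
    rw [EVM.sum_mulVec, EVM.dot_sum]
    refine Finset.sum_pos' (fun j _ => ?_) ⟨j0, Finset.mem_univ _, ?_⟩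
    · obtain ⟨u, hu, hueq⟩ := htpos k hG j
      rw [smul_mulVec, dotProduct_smul, smul_eq_mul, hueq, ← RCLike.ofReal_inv, EVM.quad]
      exact mul_nonneg (by exact_mod_cast (inv_nonneg.mpr hu.le))
        (dotProduct_star_self_nonneg _)
    · obtain ⟨u, hu, hueq⟩ := htpos k hG j0
      rw [smul_mulVec, dotProduct_smul, smul_eq_mul, hueq, ← RCLike.ofReal_inv, EVM.quad]
      exact mul_pos (by exact_mod_cast (inv_pos.mpr hu))
        (dotProduct_star_self_pos_iff.mpr hj0)
  have hconjpd : ∀ k, (Γ k).PosDef → ∀ {A : Matrix (Fin d) (Fin d) 𝕜}, A.PosDef →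
      (P k * A * P k).PosDef := by
    intro k hG A hA
    have hherm : (P k * A * P k).IsHermitian := by
      unfold Matrix.IsHermitian
      simp only [conjTranspose_mul, (hPsd k).1.eq, hA.1.eq, Matrix.mul_assoc]
    refine PosDef.of_dotProduct_mulVec_pos hherm fun x hx => ?_
    have hinj := Matrix.mulVec_injective_iff_isUnit.mpr
      ((Matrix.isUnit_iff_isUnit_det _).mpr (hPdet k hG))
    have hPx : P k *ᵥ x ≠ 0 := by
      intro h0
      exact hx (hinj (h0.trans (Matrix.mulVec_zero (P k)).symm))
    have hkey : dotProduct (star x) ((P k * A * P k) *ᵥ x) =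
        dotProduct (star (P k *ᵥ x)) (A *ᵥ (P k *ᵥ x)) := by
      rw [← Matrix.mulVec_mulVec, ← Matrix.mulVec_mulVec, dotProduct_mulVec,
        star_mulVec, (hPsd k).1]
    rw [hkey]
    exact hA.dotProduct_mulVec_pos hPx
  have hMpd : ∀ k, (Γ k).PosDef → (M k).PosDef := by
    intro k hG
    rw [hMQ k]
    exact hconjpd k hG (hQpd k hG)
  have hcpos : ∀ k, (Γ k).PosDef → ∃ ρ : ℝ, 0 < ρ ∧
      Matrix.trace (Γ k * (M k)⁻¹) = (ρ : 𝕜) := by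
    intro k hG
    have h1 : Matrix.trace (Γ k * (M k)⁻¹) = Matrix.trace (P k * (M k)⁻¹ * P k) := by
      rw [← hPsq k]
      exact (Matrix.trace_mul_cycle (P k) ((M k)⁻¹) (P k)).symm
    have h2 := EVM.trace_pd_pos hd (hconjpd k hG (hMpd k hG).inv)
    obtain ⟨ρ, hρ, heq⟩ := RCLike.pos_iff_exists_ofReal.mp h2
    exact ⟨ρ, hρ, by rw [h1, ← heq]⟩
  have hΓpd : ∀ k, (Γ k).PosDef := by
    intro k
    induction k with
    | zero =>
      rw [hΓ0]
      have hcast : ((d : 𝕜))⁻¹ = (((d : ℝ)⁻¹ : ℝ) : 𝕜) := by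
        rw [RCLike.ofReal_inv, RCLike.ofReal_natCast]
      rw [hcast]
      exact EVM.smul_pd (inv_pos.mpr (Nat.cast_pos.mpr hd)) Matrix.PosDef.one
    | succ k ih =>
      rw [hrec k]
      obtain ⟨ρ, hρ, heq⟩ := hcpos k ih
      rw [heq, ← RCLike.ofReal_inv]
      exact EVM.smul_pd (inv_pos.mpr hρ) (hconjpd k ih (hMpd k ih).inv)
  have hQinv : ∀ k, P k * (M k)⁻¹ * P k = (Q k)⁻¹ := by
    intro k
    have hG := hΓpd k
    rw [hMQ k, Matrix.mul_inv_rev, Matrix.mul_inv_rev]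
    calc P k * ((P k)⁻¹ * ((Q k)⁻¹ * (P k)⁻¹)) * P k
        = (P k * (P k)⁻¹) * (Q k)⁻¹ * ((P k)⁻¹ * P k) := by simp only [Matrix.mul_assoc]
      _ = (Q k)⁻¹ := by
          rw [Matrix.mul_nonsing_inv _ (hPdet k hG), Matrix.nonsing_inv_mul _ (hPdet k hG),
            one_mul, Matrix.mul_one]
  -- the key one-step comparison
  have key : ∀ k : ℕ,
      (M (k+1) - (((⨅ i, (hH k).eigenvalues i : ℝ) : 𝕜)) • 1).PosSemidef ∧
      ((((⨆ i, (hH k).eigenvalues i : ℝ) : 𝕜)) • 1 - M (k+1)).PosSemidef := by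
    intro k
    have hG := hΓpd k
    have hG' := hΓpd (k+1)
    have hMpdk := hMpd k hG
    set a : ℝ := ⨅ i, (hH k).eigenvalues i with hadef
    set b : ℝ := ⨆ i, (hH k).eigenvalues i with hbdef
    have hbddB : BddBelow (Set.range fun i => (hH k).eigenvalues i) :=
      Set.Finite.bddBelow (Set.finite_range _)
    have hbddA : BddAbove (Set.range fun i => (hH k).eigenvalues i) :=
      Set.Finite.bddAbove (Set.finite_range _)
    have ha_le : ∀ i, a ≤ (hH k).eigenvalues i := fun i => ciInf_le hbddB i
    have hle_b : ∀ i, (hH k).eigenvalues i ≤ b := fun i => le_ciSup hbddA i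
    have hapos : 0 < a := by
      obtain ⟨i0, hi0⟩ := Finite.exists_min fun i => (hH k).eigenvalues i
      have ha0 : a = (hH k).eigenvalues i0 := le_antisymm (ha_le i0) (le_ciInf hi0)
      rw [ha0]
      exact hMpdk.eigenvalues_pos i0
    have hbpos : 0 < b :=
      lt_of_lt_of_le hapos ((ha_le (Classical.arbitrary _)).trans (hle_b _))
    have hMinvU : ((((a⁻¹ : ℝ)) : 𝕜) • 1 - (M k)⁻¹).PosSemidef :=
      EVM2.inv_upper_psd hMpdk hapos ha_le
    have hMinvL : ((M k)⁻¹ - (((b⁻¹ : ℝ)) : 𝕜) • 1).PosSemidef :=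
      EVM2.inv_lower_psd hMpdk hle_b
    obtain ⟨ρ, hρ, hρeq⟩ := hcpos k hG
    choose u hu hueq using htpos k hG
    have hψ : ∀ j : Fin n, ∃ w' : ℝ, 0 ≤ w' ∧
        Matrix.trace ((P k * T j)ᴴ * (M k)⁻¹ * (P k * T j)) = (w' : 𝕜) := by
      intro j
      have hpsd0 := (hMpdk.inv).posSemidef.conjTranspose_mul_mul_same (P k * T j)
      obtain ⟨w', hw', heq⟩ := RCLike.nonneg_iff_exists_ofReal.mp (EVM.trace_psd_nonneg hpsd0)
      exact ⟨w', hw', heq.symm⟩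
    choose w hw0 hweq using hψ
    have hwa : ∀ j, w j ≤ a⁻¹ * u j := by
      intro j
      have h0 := EVM.trace_psd_nonneg (hMinvU.conjTranspose_mul_mul_same (P k * T j))
      have hexp : (P k * T j)ᴴ * ((((a⁻¹ : ℝ) : 𝕜)) • 1 - (M k)⁻¹) * (P k * T j) =
          (((a⁻¹ : ℝ) : 𝕜)) • ((P k * T j)ᴴ * (P k * T j)) -
            (P k * T j)ᴴ * (M k)⁻¹ * (P k * T j) := by
        rw [Matrix.mul_sub, Matrix.sub_mul, Matrix.mul_smul, Matrix.mul_one, Matrix.smul_mul]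
      rw [hexp, Matrix.trace_sub, Matrix.trace_smul, ← htrf k j, hueq j, hweq j,
        smul_eq_mul, ← RCLike.ofReal_mul, sub_nonneg, RCLike.ofReal_le_ofReal] at h0
      exact h0
    have hbw : ∀ j, b⁻¹ * u j ≤ w j := by
      intro j
      have h0 := EVM.trace_psd_nonneg (hMinvL.conjTranspose_mul_mul_same (P k * T j))
      have hexp : (P k * T j)ᴴ * ((M k)⁻¹ - (((b⁻¹ : ℝ) : 𝕜)) • 1) * (P k * T j) =
          (P k * T j)ᴴ * (M k)⁻¹ * (P k * T j) -
            (((b⁻¹ : ℝ) : 𝕜)) • ((P k * T j)ᴴ * (P k * T j)) := by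
        rw [Matrix.mul_sub, Matrix.sub_mul, Matrix.mul_smul, Matrix.mul_one, Matrix.smul_mul]
      rw [hexp, Matrix.trace_sub, Matrix.trace_smul, ← htrf k j, hueq j, hweq j,
        smul_eq_mul, ← RCLike.ofReal_mul, sub_nonneg, RCLike.ofReal_le_ofReal] at h0
      exact h0
    have hSfor : ∀ j : Fin n, (T j)ᴴ * (P k * (M k)⁻¹ * P k) * T j =
        (P k * T j)ᴴ * (M k)⁻¹ * (P k * T j) := by
      intro j
      rw [conjTranspose_mul, (hPsd k).1]
      simp only [Matrix.mul_assoc]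
    have ht' : ∀ j : Fin n,
        Matrix.trace ((T j)ᴴ * Γ (k+1) * T j) = ((ρ⁻¹ * w j : ℝ) : 𝕜) := by
      intro j
      rw [hrec k, hρeq, ← RCLike.ofReal_inv, Matrix.mul_smul, Matrix.smul_mul,
        Matrix.trace_smul, smul_eq_mul, hSfor j, hweq j, ← RCLike.ofReal_mul]
    have hwρ : ∀ j, 0 < ρ⁻¹ * w j := by
      intro j
      obtain ⟨u', hu', hueq'⟩ := htpos (k+1) hG' j
      have heq2 : ((ρ⁻¹ * w j : ℝ) : 𝕜) = ((u' : ℝ) : 𝕜) := (ht' j).symm.trans hueq'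
      rw [RCLike.ofReal_inj] at heq2
      rw [heq2]
      exact hu'
    -- the commuting square-root argument
    have hQdetU : IsUnit (Q k).det := isUnit_iff_ne_zero.mpr (hQpd k hG).det_pos.ne'
    have h2 : Γ (k+1) = (((ρ⁻¹ : ℝ)) : 𝕜) • (Q k)⁻¹ := by
      rw [hrec k, hρeq, ← RCLike.ofReal_inv, hQinv k]
    have hρinvne : ((((ρ⁻¹ : ℝ)) : 𝕜)) ≠ 0 := by
      simpa using (inv_pos.mpr hρ).ne'
    have hcomm : P (k+1) * (Q k)⁻¹ = (Q k)⁻¹ * P (k+1) := by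
      have h1 : P (k+1) * Γ (k+1) = Γ (k+1) * P (k+1) := by
        rw [← hPsq (k+1), ← Matrix.mul_assoc]
      rw [h2, mul_smul_comm, smul_mul_assoc] at h1
      exact smul_right_injective _ hρinvne h1
    have hcomm' : P (k+1) * Q k = Q k * P (k+1) := by
      have h3 := congrArg (fun X => Q k * X * Q k) hcomm
      simp only [Matrix.mul_assoc] at h3
      rw [Matrix.nonsing_inv_mul _ hQdetU, Matrix.mul_one] at h3
      rw [← Matrix.mul_assoc, Matrix.mul_nonsing_inv _ hQdetU, one_mul] at h3
      exact h3.symm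
    have hP'QP' : P (k+1) * Q k * P (k+1) = (((ρ⁻¹ : ℝ)) : 𝕜) • 1 := by
      calc P (k+1) * Q k * P (k+1) = Q k * (P (k+1) * P (k+1)) := by
            rw [hcomm', Matrix.mul_assoc]
        _ = Q k * Γ (k+1) := by rw [hPsq (k+1)]
        _ = (((ρ⁻¹ : ℝ)) : 𝕜) • (Q k * (Q k)⁻¹) := by rw [h2, mul_smul_comm]
        _ = (((ρ⁻¹ : ℝ)) : 𝕜) • 1 := by rw [Matrix.mul_nonsing_inv _ hQdetU]
    -- matrix identities for M (k+1) and scalar matrices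
    have hXpsd : ∀ j : Fin n, (P (k+1) * T j * (T j)ᴴ * P (k+1)).PosSemidef := by
      intro j
      have hX : P (k+1) * T j * (T j)ᴴ * P (k+1) =
          P (k+1) * (T j * (T j)ᴴ) * (P (k+1))ᴴ := by
        rw [(hPsd (k+1)).1]
        simp only [Matrix.mul_assoc]
      rw [hX]
      exact (hTTpsd j).mul_mul_conjTranspose_same _
    have hM1 : M (k+1) = (((d : ℝ) / n : ℝ) : 𝕜) •
        ∑ j, ((((ρ⁻¹ * w j)⁻¹ : ℝ)) : 𝕜) • (P (k+1) * T j * (T j)ᴴ * P (k+1)) := by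
      rw [hM (k+1)]
      congr 1
      refine Finset.sum_congr rfl fun j _ => ?_
      rw [ht' j, ← RCLike.ofReal_inv]
    have hsmul : ∀ c : ℝ, ((c : ℝ) : 𝕜) • (1 : Matrix (Fin d) (Fin d) 𝕜) =
        (((d : ℝ) / n : ℝ) : 𝕜) •
          ∑ j, (((c * ρ * (u j)⁻¹ : ℝ)) : 𝕜) • (P (k+1) * T j * (T j)ᴴ * P (k+1)) := by
      intro c
      calc ((c : ℝ) : 𝕜) • (1 : Matrix (Fin d) (Fin d) 𝕜)
          = ((c * ρ : ℝ) : 𝕜) • (P (k+1) * Q k * P (k+1)) := by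
            rw [hP'QP', smul_smul, ← RCLike.ofReal_mul]
            congr 2
            rw [mul_assoc, mul_inv_cancel₀ hρ.ne', mul_one]
        _ = ((c * ρ : ℝ) : 𝕜) • ((((d : ℝ) / n : ℝ) : 𝕜) •
              ∑ j, ((((u j)⁻¹ : ℝ)) : 𝕜) • (P (k+1) * T j * (T j)ᴴ * P (k+1))) := by
            rw [hPQP k (k+1)]
            congr 2
            refine Finset.sum_congr rfl fun j _ => ?_
            rw [hueq j, ← RCLike.ofReal_inv]
        _ = (((d : ℝ) / n : ℝ) : 𝕜) •
              ∑ j, (((c * ρ * (u j)⁻¹ : ℝ)) : 𝕜) • (P (k+1) * T j * (T j)ᴴ * P (k+1)) := by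
            rw [smul_smul, mul_comm, ← smul_smul, Finset.smul_sum]
            congr 1
            refine Finset.sum_congr rfl fun j _ => ?_
            rw [smul_smul, ← RCLike.ofReal_mul]
    constructor
    · have hdiff : M (k+1) - ((a : ℝ) : 𝕜) • 1 =
          (((d : ℝ) / n : ℝ) : 𝕜) • ∑ j,
            ((((ρ⁻¹ * w j)⁻¹ - a * ρ * (u j)⁻¹ : ℝ)) : 𝕜) •
              (P (k+1) * T j * (T j)ᴴ * P (k+1)) := by
        rw [hM1, hsmul a, ← smul_sub, ← Finset.sum_sub_distrib]
        congr 1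
        refine Finset.sum_congr rfl fun j _ => ?_
        rw [← sub_smul, ← RCLike.ofReal_sub]
      rw [hdiff]
      refine EVM.smul_psd hdn.le (EVM.sum_psd _ _ fun j _ => EVM.smul_psd ?_ (hXpsd j))
      have hub : ρ⁻¹ * w j ≤ a⁻¹ * ρ⁻¹ * u j := by
        calc ρ⁻¹ * w j ≤ ρ⁻¹ * (a⁻¹ * u j) :=
              mul_le_mul_of_nonneg_left (hwa j) (inv_nonneg.mpr hρ.le)
          _ = a⁻¹ * ρ⁻¹ * u j := by ring
      have hinv : a * ρ * (u j)⁻¹ ≤ (ρ⁻¹ * w j)⁻¹ := by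
        have h4 := inv_anti₀ (hwρ j) hub
        calc a * ρ * (u j)⁻¹ = (a⁻¹ * ρ⁻¹ * u j)⁻¹ := by
              rw [mul_inv, mul_inv, inv_inv, inv_inv]
          _ ≤ (ρ⁻¹ * w j)⁻¹ := h4
      linarith
    · have hdiff : ((b : ℝ) : 𝕜) • 1 - M (k+1) =
          (((d : ℝ) / n : ℝ) : 𝕜) • ∑ j,
            (((b * ρ * (u j)⁻¹ - (ρ⁻¹ * w j)⁻¹ : ℝ)) : 𝕜) •
              (P (k+1) * T j * (T j)ᴴ * P (k+1)) := by
        rw [hM1, hsmul b, ← smul_sub, ← Finset.sum_sub_distrib]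
        congr 1
        refine Finset.sum_congr rfl fun j _ => ?_
        rw [← sub_smul, ← RCLike.ofReal_sub]
      rw [hdiff]
      refine EVM.smul_psd hdn.le (EVM.sum_psd _ _ fun j _ => EVM.smul_psd ?_ (hXpsd j))
      have hlb : b⁻¹ * ρ⁻¹ * u j ≤ ρ⁻¹ * w j := by
        calc b⁻¹ * ρ⁻¹ * u j = ρ⁻¹ * (b⁻¹ * u j) := by ring
          _ ≤ ρ⁻¹ * w j := mul_le_mul_of_nonneg_left (hbw j) (inv_nonneg.mpr hρ.le)
      have hlbpos : 0 < b⁻¹ * ρ⁻¹ * u j :=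
        mul_pos (mul_pos (inv_pos.mpr hbpos) (inv_pos.mpr hρ)) (hu j)
      have hinv : (ρ⁻¹ * w j)⁻¹ ≤ b * ρ * (u j)⁻¹ := by
        have h4 := inv_anti₀ hlbpos hlb
        calc (ρ⁻¹ * w j)⁻¹ ≤ (b⁻¹ * ρ⁻¹ * u j)⁻¹ := h4
          _ = b * ρ * (u j)⁻¹ := by rw [mul_inv, mul_inv, inv_inv, inv_inv]
      linarith
  refine ⟨monotone_nat_of_le_succ fun k => ?_, antitone_nat_of_succ_le fun k => ?_⟩
  · exact le_ciInf fun i => EVM2.le_eig (hH (k+1)) (key k).1 i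
  · exact ciSup_le fun i => EVM2.eig_le (hH (k+1)) (key k).2 i
end
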